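/- Define w(x) = (21/13)x plus a bonus: 997/3900 if x > 1/2, 256/3900 if 1/3 < x ≤ 1/2, 216/3900 if 1/4 < x ≤ 1/3, 40/3900 if 1/6 < x ≤ 1/4, and 0 if 0 ≤ x ≤ 1/6. Then for any finite multiset B of reals in [0,1] with total sum at most 1, the total weight ∑_{x∈B} w(x) is at most 581/300. -/
import Mathlib

noncomputable def w1 (x : ℝ) : ℝ :=
  21/13 * x +
    if x > 1/2 then 997/3900
    else if x > 1/3 then 256/3900
    else if x > 1/4 then 216/3900
    else if x > 1/6 then 40/3900
    else 0

lemma w1_eq1 {x : ℝ} (h : 1/2 < x) : w1 x = 21/13*x + 997/3900 := by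
  unfold w1; rw [if_pos h]

lemma w1_eq2 {x : ℝ} (h1 : 1/3 < x) (h2 : x ≤ 1/2) : w1 x = 21/13*x + 256/3900 := by
  have h3 : ¬ (1/2 < x) := not_lt.2 h2
  unfold w1; rw [if_neg h3, if_pos h1]

lemma w1_eq3 {x : ℝ} (h1 : 1/4 < x) (h2 : x ≤ 1/3) : w1 x = 21/13*x + 216/3900 := by
  have h3 : ¬ ((1:ℝ)/2 < x) := by push_neg; linarith
  have h4 : ¬ ((1:ℝ)/3 < x) := not_lt.2 h2
  unfold w1; rw [if_neg h3, if_neg h4, if_pos h1]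

lemma w1_eq4 {x : ℝ} (h1 : 1/6 < x) (h2 : x ≤ 1/4) : w1 x = 21/13*x + 40/3900 := by
  have h3 : ¬ ((1:ℝ)/2 < x) := by push_neg; linarith
  have h4 : ¬ ((1:ℝ)/3 < x) := by push_neg; linarith
  have h5 : ¬ ((1:ℝ)/4 < x) := not_lt.2 h2
  unfold w1; rw [if_neg h3, if_neg h4, if_neg h5, if_pos h1]

lemma w1_eq5 {x : ℝ} (h2 : x ≤ 1/6) : w1 x = 21/13*x := by
  have h3 : ¬ ((1:ℝ)/2 < x) := by push_neg; linarith
  have h4 : ¬ ((1:ℝ)/3 < x) := by push_neg; linarith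
  have h5 : ¬ ((1:ℝ)/4 < x) := by push_neg; linarith
  have h6 : ¬ ((1:ℝ)/6 < x) := not_lt.2 h2
  unfold w1; rw [if_neg h3, if_neg h4, if_neg h5, if_neg h6]; ring

lemma map_w1_sum_le (c : ℝ) :
    ∀ (M : Multiset ℝ), (∀ x ∈ M, w1 x = 21/13 * x + c) →
      (M.map w1).sum = 21/13 * M.sum + (M.card : ℝ) * c := by
  intro M
  induction M using Multiset.induction_on with
  | empty => simp
  | cons x s ih =>
    intro h
    have h1 := h x (Multiset.mem_cons_self x s)
    have h2 := ih (fun y hy => h y (Multiset.mem_cons_of_mem hy))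
    simp only [Multiset.map_cons, Multiset.sum_cons, Multiset.card_cons]
    push_cast
    rw [h1, h2]; ring

lemma sum_ge_card_mul (t : ℝ) :
    ∀ (M : Multiset ℝ), (∀ x ∈ M, t ≤ x) → (M.card : ℝ) * t ≤ M.sum := by
  intro M
  induction M using Multiset.induction_on with
  | empty => simp
  | cons x s ih =>
    intro h
    have h1 := h x (Multiset.mem_cons_self x s)
    have h2 := ih (fun y hy => h y (Multiset.mem_cons_of_mem hy))
    simp only [Multiset.sum_cons, Multiset.card_cons]
    push_cast
    nlinarith

lemma sum_gt_card_mul (t : ℝ) (M : Multiset ℝ) (hM : M ≠ 0)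
    (h : ∀ x ∈ M, t < x) : (M.card : ℝ) * t < M.sum := by
  obtain ⟨x, hx⟩ := Multiset.exists_mem_of_ne_zero hM
  obtain ⟨s, rfl⟩ : ∃ s, M = x ::ₘ s := ⟨M.erase x, (Multiset.cons_erase hx).symm⟩
  have h1 := h x (Multiset.mem_cons_self x s)
  have h2 := sum_ge_card_mul t s (fun y hy => le_of_lt (h y (Multiset.mem_cons_of_mem hy)))
  simp only [Multiset.sum_cons, Multiset.card_cons]
  push_cast
  nlinarith

lemma count_bound (a b c d : ℕ) (h : 6*a + 4*b + 3*c + 2*d ≤ 11) :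
    997*a + 256*b + 216*c + 40*d ≤ 1253 := by
  have ha : a ≤ 1 := by omega
  have hb : b ≤ 2 := by omega
  have hc : c ≤ 3 := by omega
  have hd : d ≤ 5 := by omega
  interval_cases a <;> interval_cases b <;> interval_cases c <;> interval_cases d <;> omega

set_option maxHeartbeats 1000000 in
theorem stmt1 (B : Multiset ℝ) (hB : ∀ x ∈ B, 0 ≤ x ∧ x ≤ 1)
    (hsum : B.sum ≤ 1) : (B.map w1).sum ≤ 581/300 := by
  classical
  set F1 := B.filter (fun x => 1/2 < x) with hF1
  set R1 := B.filter (fun x => ¬ 1/2 < x) with hR1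
  set F2 := R1.filter (fun x => 1/3 < x) with hF2
  set R2 := R1.filter (fun x => ¬ 1/3 < x) with hR2
  set F3 := R2.filter (fun x => 1/4 < x) with hF3
  set R3 := R2.filter (fun x => ¬ 1/4 < x) with hR3
  set F4 := R3.filter (fun x => 1/6 < x) with hF4
  set R4 := R3.filter (fun x => ¬ 1/6 < x) with hR4
  have eB : F1 + R1 = B := Multiset.filter_add_not _ B
  have eR1 : F2 + R2 = R1 := Multiset.filter_add_not _ R1
  have eR2 : F3 + R3 = R2 := Multiset.filter_add_not _ R2
  have eR3 : F4 + R4 = R3 := Multiset.filter_add_not _ R3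
  -- membership facts
  have m1 : ∀ x ∈ F1, 1/2 < x := fun x hx => (Multiset.mem_filter.1 hx).2
  have mR1 : ∀ x ∈ R1, x ≤ 1/2 := fun x hx => not_lt.1 (Multiset.mem_filter.1 hx).2
  have m2 : ∀ x ∈ F2, 1/3 < x ∧ x ≤ 1/2 := fun x hx =>
    ⟨(Multiset.mem_filter.1 hx).2, mR1 x (Multiset.mem_of_mem_filter hx)⟩
  have mR2 : ∀ x ∈ R2, x ≤ 1/3 := fun x hx => not_lt.1 (Multiset.mem_filter.1 hx).2
  have m3 : ∀ x ∈ F3, 1/4 < x ∧ x ≤ 1/3 := fun x hx =>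
    ⟨(Multiset.mem_filter.1 hx).2, mR2 x (Multiset.mem_of_mem_filter hx)⟩
  have mR3 : ∀ x ∈ R3, x ≤ 1/4 := fun x hx => not_lt.1 (Multiset.mem_filter.1 hx).2
  have m4 : ∀ x ∈ F4, 1/6 < x ∧ x ≤ 1/4 := fun x hx =>
    ⟨(Multiset.mem_filter.1 hx).2, mR3 x (Multiset.mem_of_mem_filter hx)⟩
  have mR4 : ∀ x ∈ R4, x ≤ 1/6 := fun x hx => not_lt.1 (Multiset.mem_filter.1 hx).2
  have mR4B : ∀ x ∈ R4, x ∈ B := fun x hx =>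
    Multiset.mem_of_mem_filter (Multiset.mem_of_mem_filter
      (Multiset.mem_of_mem_filter (Multiset.mem_of_mem_filter hx)))
  -- sums over parts
  have s1 : (F1.map w1).sum = 21/13 * F1.sum + (F1.card : ℝ) * (997/3900) :=
    map_w1_sum_le _ _ (fun x hx => w1_eq1 (m1 x hx))
  have s2 : (F2.map w1).sum = 21/13 * F2.sum + (F2.card : ℝ) * (256/3900) :=
    map_w1_sum_le _ _ (fun x hx => w1_eq2 (m2 x hx).1 (m2 x hx).2)
  have s3 : (F3.map w1).sum = 21/13 * F3.sum + (F3.card : ℝ) * (216/3900) :=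
    map_w1_sum_le _ _ (fun x hx => w1_eq3 (m3 x hx).1 (m3 x hx).2)
  have s4 : (F4.map w1).sum = 21/13 * F4.sum + (F4.card : ℝ) * (40/3900) :=
    map_w1_sum_le _ _ (fun x hx => w1_eq4 (m4 x hx).1 (m4 x hx).2)
  have s5 : (R4.map w1).sum = 21/13 * R4.sum + (R4.card : ℝ) * 0 :=
    map_w1_sum_le _ _ (fun x hx => by rw [w1_eq5 (mR4 x hx)]; ring)
  -- lower bounds on part sums
  have g1 : (F1.card : ℝ) * (1/2) ≤ F1.sum :=
    sum_ge_card_mul _ _ (fun x hx => le_of_lt (m1 x hx))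
  have g2 : (F2.card : ℝ) * (1/3) ≤ F2.sum :=
    sum_ge_card_mul _ _ (fun x hx => le_of_lt (m2 x hx).1)
  have g3 : (F3.card : ℝ) * (1/4) ≤ F3.sum :=
    sum_ge_card_mul _ _ (fun x hx => le_of_lt (m3 x hx).1)
  have g4 : (F4.card : ℝ) * (1/6) ≤ F4.sum :=
    sum_ge_card_mul _ _ (fun x hx => le_of_lt (m4 x hx).1)
  have g5 : (0:ℝ) ≤ R4.sum := by
    have := sum_ge_card_mul 0 R4 (fun x hx => (hB x (mR4B x hx)).1)
    simpa using this
  -- total sum decomposition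
  have hBsum : B.sum = F1.sum + F2.sum + F3.sum + F4.sum + R4.sum := by
    rw [← eB, ← eR1, ← eR2, ← eR3]
    simp [Multiset.sum_add]
    ring
  have hBmap : (B.map w1).sum =
      (F1.map w1).sum + (F2.map w1).sum + (F3.map w1).sum + (F4.map w1).sum
        + (R4.map w1).sum := by
    rw [← eB, ← eR1, ← eR2, ← eR3]
    simp [Multiset.map_add, Multiset.sum_add]
    ring
  -- the counting bound
  have key : 997 * F1.card + 256 * F2.card + 216 * F3.card + 40 * F4.card ≤ 1253 := by
    by_cases hz : F1 = 0 ∧ F2 = 0 ∧ F3 = 0 ∧ F4 = 0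
    · obtain ⟨z1, z2, z3, z4⟩ := hz
      simp [z1, z2, z3, z4]
    · have hstrict : (F1.card : ℝ) * (1/2) + (F2.card : ℝ) * (1/3)
          + (F3.card : ℝ) * (1/4) + (F4.card : ℝ) * (1/6)
          < F1.sum + F2.sum + F3.sum + F4.sum := by
        rcases not_and_or.1 hz with h | h'
        · have := sum_gt_card_mul (1/2) F1 h m1
          linarith
        rcases not_and_or.1 h' with h | h'
        · have := sum_gt_card_mul (1/3) F2 h (fun x hx => (m2 x hx).1)
          linarith
        rcases not_and_or.1 h' with h | h
        · have := sum_gt_card_mul (1/4) F3 h (fun x hx => (m3 x hx).1)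
          linarith
        · have := sum_gt_card_mul (1/6) F4 h (fun x hx => (m4 x hx).1)
          linarith
      have hlt : (6 * F1.card + 4 * F2.card + 3 * F3.card + 2 * F4.card : ℝ) < 12 := by
        nlinarith [hstrict, g5, hsum, hBsum]
      have hlt' : 6 * F1.card + 4 * F2.card + 3 * F3.card + 2 * F4.card < 12 := by
        exact_mod_cast hlt
      exact count_bound _ _ _ _ (by omega)
  have keyR : (997 * F1.card + 256 * F2.card + 216 * F3.card + 40 * F4.card : ℝ) ≤ 1253 := by
    exact_mod_cast key
  push_cast at keyR
  rw [hBmap, s1, s2, s3, s4, s5]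
  have hS : F1.sum + F2.sum + F3.sum + F4.sum + R4.sum ≤ 1 := by rw [← hBsum]; exact hsum
  nlinarith [keyR, hS, g5, g1, g2, g3, g4]
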